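/- The 2-dimensional Lebesgue measure of the set of pairs (s,t) in the unit square [0,1]² for which the three lengths p = min(s,t), q = |s-t| and r = 1-max(s,t) satisfy p² + q² + r² < 6·min(p², q², r²) equals 1/3 − (5/9)·ln(8/5). (This is the probability that the three pieces of a broken stick are the medians of an acute triangle.) -/

import Mathlib

open MeasureTheory
section BrokenStickAux
open Set

noncomputable def s1 (p : ℝ) : ℝ := Real.sqrt (9*p^2+2*p-1)
noncomputable def s2 (p : ℝ) : ℝ := Real.sqrt (9*p^2-10*p+5)
noncomputable def aa : ℝ := (Real.sqrt 10 - 1)/9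
noncomputable def Lf (p : ℝ) : ℝ := max ((1-p-s1 p)/2) ((s2 p-(1-p))/4)
noncomputable def Uf (p : ℝ) : ℝ := min ((1-p+s1 p)/2) ((5*(1-p)-s2 p)/4)

def P3 (p q r : ℝ) : Prop := q^2+r^2<5*p^2 ∧ p^2+r^2<5*q^2 ∧ p^2+q^2<5*r^2

def SS : Set (ℝ × ℝ) := {p : ℝ × ℝ | p.1 ∈ Set.Icc (0:ℝ) 1 ∧ p.2 ∈ Set.Icc (0:ℝ) 1 ∧
      min p.1 p.2 ^ 2 + |p.1 - p.2| ^ 2 + (1 - max p.1 p.2) ^ 2 <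
        6 * min (min p.1 p.2 ^ 2) (min (|p.1 - p.2| ^ 2) ((1 - max p.1 p.2) ^ 2))}

def AA : Set (ℝ × ℝ) := {x : ℝ × ℝ | x.1 ∈ Set.Icc (0:ℝ) 1 ∧ x.2 ∈ Set.Icc (0:ℝ) 1 ∧
  x.1 < x.2 ∧ P3 x.1 (x.2 - x.1) (1 - x.2)}

lemma sqrt10_sq : Real.sqrt 10 ^ 2 = 10 := Real.sq_sqrt (by norm_num)
lemma sqrt10_lt : Real.sqrt 10 < 13/4 := by
  nlinarith [sqrt10_sq, Real.sqrt_nonneg 10]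
lemma sqrt10_gt : 3 < Real.sqrt 10 := by
  nlinarith [sqrt10_sq, Real.sqrt_nonneg 10]
lemma aa_pos : 0 < aa := by unfold aa; nlinarith [sqrt10_gt]
lemma aa_lt : aa < 1/4 := by unfold aa; nlinarith [sqrt10_lt]
lemma aa_root : 9*aa^2+2*aa-1 = 0 := by unfold aa; nlinarith [sqrt10_sq]

lemma cond_iff {x y : ℝ} (h : x < y) :
    (min x y ^ 2 + |x - y| ^ 2 + (1 - max x y) ^ 2 <
        6 * min (min x y ^ 2) (min (|x - y| ^ 2) ((1 - max x y) ^ 2))) ↔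
    P3 x (y - x) (1 - y) := by
  rw [min_eq_left h.le, max_eq_right h.le, abs_sub_comm, abs_of_pos (by linarith)]
  rw [mul_min_of_nonneg _ _ (by norm_num : (0:ℝ) ≤ 6), mul_min_of_nonneg _ _ (by norm_num : (0:ℝ) ≤ 6), lt_min_iff, lt_min_iff]
  unfold P3
  constructor
  · rintro ⟨h1, h2, h3⟩
    exact ⟨by nlinarith, by nlinarith, by nlinarith⟩
  · rintro ⟨h1, h2, h3⟩
    exact ⟨by nlinarith, by nlinarith, by nlinarith⟩

lemma SS_eq : SS = AA ∪ Prod.swap ⁻¹' AA := by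
  ext ⟨x, y⟩
  simp only [SS, AA, Set.mem_setOf_eq, Set.mem_union, Set.mem_preimage, Prod.swap_prod_mk]
  rcases lt_trichotomy x y with h | h | h
  · constructor
    · rintro ⟨hx, hy, hc⟩
      exact Or.inl ⟨hx, hy, h, (cond_iff h).1 hc⟩
    · rintro (⟨hx, hy, _, hc⟩ | ⟨hy, hx, h', _⟩)
      · exact ⟨hx, hy, (cond_iff h).2 hc⟩
      · exact absurd h' (not_lt.2 h.le)
  · subst h
    constructor
    · rintro ⟨hx, hy, hc⟩
      exfalso
      have h1 : min (min x x ^ 2) (min (|x - x| ^ 2) ((1 - max x x) ^ 2)) ≤ |x - x| ^ 2 :=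
        le_trans (min_le_right _ _) (min_le_left _ _)
      simp only [sub_self, abs_zero] at h1 hc
      nlinarith [sq_nonneg (min x x), sq_nonneg (1 - max x x)]
    · rintro (⟨_, _, h', _⟩ | ⟨_, _, h', _⟩) <;> exact absurd h' (lt_irrefl x)
  · have key := cond_iff h
    constructor
    · rintro ⟨hx, hy, hc⟩
      refine Or.inr ⟨hy, hx, h, ?_⟩
      rw [min_comm, max_comm, abs_sub_comm] at hc
      exact (cond_iff h).1 hc
    · rintro (⟨_, _, h', _⟩ | ⟨hy, hx, _, hc⟩)
      · exact absurd h' (not_lt.2 h.le)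
      · refine ⟨hx, hy, ?_⟩
        rw [min_comm, max_comm, abs_sub_comm]
        exact (cond_iff h).2 hc

lemma AA_measurable : MeasurableSet AA := by
  unfold AA P3
  simp only [Set.setOf_and]
  refine MeasurableSet.inter ?_ (MeasurableSet.inter ?_ (MeasurableSet.inter ?_
    (MeasurableSet.inter ?_ (MeasurableSet.inter ?_ ?_))))
  · exact measurable_fst measurableSet_Icc
  · exact measurable_snd measurableSet_Icc
  all_goals exact measurableSet_lt (by fun_prop) (by fun_prop)

example : True := trivial

def TT : Set (ℝ × ℝ) := (fun z : ℝ × ℝ => (z.1, z.1 + z.2)) ⁻¹' AA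

lemma vol_SS : volume SS = 2 * volume TT := by
  have hswap : volume (Prod.swap ⁻¹' AA) = volume AA := by
    rw [Measure.volume_eq_prod]
    exact Measure.measurePreserving_swap.measure_preimage AA_measurable.nullMeasurableSet
  have hdisj : Disjoint AA (Prod.swap ⁻¹' AA) := by
    rw [Set.disjoint_iff]
    rintro ⟨x, y⟩ ⟨⟨_, _, h1, _⟩, ⟨_, _, h2, _⟩⟩
    exact absurd h1 (not_lt.2 h2.le)
  have hT : volume TT = volume AA := by
    rw [TT, Measure.volume_eq_prod]
    exact (measurePreserving_prod_add volume volume).measure_preimage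
      AA_measurable.nullMeasurableSet
  rw [SS_eq, measure_union hdisj (AA_measurable.preimage measurable_swap), hswap, hT,
    two_mul]

lemma s2_arg_nonneg (p : ℝ) : 0 ≤ 9*p^2-10*p+5 := by nlinarith [sq_nonneg (3*p-5/3)]
lemma s2_sq (p : ℝ) : s2 p ^ 2 = 9*p^2-10*p+5 := Real.sq_sqrt (s2_arg_nonneg p)
lemma s2_nonneg (p : ℝ) : 0 ≤ s2 p := Real.sqrt_nonneg _
lemma s1_nonneg (p : ℝ) : 0 ≤ s1 p := Real.sqrt_nonneg _

lemma s2_gt {p : ℝ} (hp : p ≤ 1) : 1 - p < s2 p := by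
  rw [s2, Real.lt_sqrt (by linarith)]
  nlinarith [sq_nonneg (2*p-1)]

lemma alg2 {p q : ℝ} (C2 : p^2+(1-(p+q))^2 < 5*q^2) : 9*p^2-10*p+5 < (4*q+1-p)^2 := by
  nlinarith [C2]

lemma alg3 {p q : ℝ} (C3 : p^2+q^2 < 5*(1-(p+q))^2) : 9*p^2-10*p+5 < (5*(1-p)-4*q)^2 := by
  nlinarith [C3]

lemma alg2' {p q : ℝ} (h : 9*p^2-10*p+5 < (4*q+1-p)^2) : p^2+(1-(p+q))^2 < 5*q^2 := by
  nlinarith [h]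

lemma alg3' {p q : ℝ} (h : 9*p^2-10*p+5 < (5*(1-p)-4*q)^2) : p^2+q^2 < 5*(1-(p+q))^2 := by
  nlinarith [h]

lemma alg1 {p q : ℝ} (h : (1-p-2*q)^2 < 9*p^2+2*p-1) : q^2+(1-(p+q))^2 < 5*p^2 := by
  nlinarith [h]

lemma alg1' {p q : ℝ} (C1 : q^2+(1-(p+q))^2 < 5*p^2) : (1-p-2*q)^2 < 9*p^2+2*p-1 := by
  nlinarith [C1]

lemma rpos {p q : ℝ} (hq : 0 < q) (hr : 0 ≤ 1-(p+q)) (C3 : p^2+q^2 < 5*(1-(p+q))^2) :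
    0 < 1-(p+q) := by
  rcases eq_or_lt_of_le hr with h | h
  · nlinarith [sq_nonneg p, sq_nonneg q]
  · exact h

lemma halfbound {p a b : ℝ} (h4 : s2 p < a) (h5 : s2 p < b) (hab : a + b = 6*(1-p)) :
    p < 1/2 := by
  have h1 := s2_nonneg p
  have h2 := s2_sq p
  nlinarith

lemma TT_eq : TT = regionBetween Lf Uf (Ioo aa (1/2)) := by
  ext ⟨p, q⟩
  simp only [TT, AA, regionBetween, Set.mem_preimage, Set.mem_setOf_eq, Set.mem_Icc,
    Set.mem_Ioo, add_sub_cancel_left, P3]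
  constructor
  · rintro ⟨⟨hp0, hp1⟩, ⟨hpq0, hpq1⟩, hlt, C1, C2, C3⟩
    have hq : 0 < q := by linarith
    have hr : 0 < 1 - (p + q) := rpos hq (by linarith) C3
    have hf1 : 0 < 9*p^2+2*p-1 := by nlinarith [sq_nonneg (1-p-2*q)]
    have hs1 : s1 p ^ 2 = 9*p^2+2*p-1 := Real.sq_sqrt hf1.le
    have hpa : aa < p := by
      by_contra hcon
      push_neg at hcon
      have h9 : 0 ≤ (aa - p) * (9*(aa+p)+2) :=
        mul_nonneg (by linarith) (by nlinarith [aa_pos])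
      nlinarith [aa_root]
    have habs : |1-p-2*q| < s1 p := by
      have h2 : (1-p-2*q)^2 < 9*p^2+2*p-1 := alg1' C1
      calc |1-p-2*q| = Real.sqrt ((1-p-2*q)^2) := (Real.sqrt_sq_eq_abs _).symm
        _ < s1 p := Real.sqrt_lt_sqrt (sq_nonneg _) h2
    obtain ⟨hA, hB⟩ := abs_lt.1 habs
    have h4 : s2 p < 4*q+1-p := by
      rw [s2, Real.sqrt_lt' (by linarith)]
      exact alg2 C2
    have h5 : s2 p < 5*(1-p)-4*q := by
      rw [s2, Real.sqrt_lt' (by linarith)]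
      exact alg3 C3
    have hp12 : p < 1/2 := halfbound h4 h5 (by ring)
    refine ⟨⟨hpa, hp12⟩, ?_, ?_⟩
    · rw [Lf]
      apply max_lt <;> [linarith; linarith]
    · rw [Uf]
      apply lt_min <;> [linarith; linarith]
  · rintro ⟨⟨hpa, hp12⟩, hLq, hqU⟩
    rw [Lf, max_lt_iff] at hLq
    rw [Uf, lt_min_iff] at hqU
    obtain ⟨hL1, hL2⟩ := hLq
    obtain ⟨hU1, hU2⟩ := hqU
    have hp0 : 0 < p := lt_trans aa_pos hpa
    have hf1 : 0 < 9*p^2+2*p-1 := by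
      nlinarith [aa_root, aa_pos, mul_pos (sub_pos.2 hpa) (show (0:ℝ) < 9*(p+aa)+2 by nlinarith [aa_pos])]
    have hs1 : s1 p ^ 2 = 9*p^2+2*p-1 := Real.sq_sqrt hf1.le
    have hs2gt : 1 - p < s2 p := s2_gt (by linarith)
    have hq : 0 < q := by linarith
    have hr : 0 < 1 - (p+q) := by linarith
    have hC1sq : (1-p-2*q)^2 < s1 p ^ 2 := sq_lt_sq' (by linarith) (by linarith)
    rw [hs1] at hC1sq
    have hC2sq : s2 p ^ 2 < (4*q+1-p)^2 :=
      pow_lt_pow_left₀ (by linarith) (s2_nonneg p) (by norm_num)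
    have hC3sq : s2 p ^ 2 < (5*(1-p)-4*q)^2 :=
      pow_lt_pow_left₀ (by linarith) (s2_nonneg p) (by norm_num)
    rw [s2_sq] at hC2sq hC3sq
    refine ⟨⟨hp0.le, by linarith⟩, ⟨by linarith, by linarith⟩, by linarith,
      alg1 hC1sq, alg2' hC2sq, alg3' hC3sq⟩

lemma s1_sq {p : ℝ} (h : 0 ≤ 9*p^2+2*p-1) : s1 p ^ 2 = 9*p^2+2*p-1 := Real.sq_sqrt h

lemma s1_arg_nonneg {p : ℝ} (h : aa ≤ p) : 0 ≤ 9*p^2+2*p-1 := by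
  nlinarith [aa_root, aa_pos, mul_nonneg (sub_nonneg.2 h) (show (0:ℝ) ≤ 9*(p+aa)+2 by nlinarith [aa_pos])]

lemma s2_le {p : ℝ} (h : p ≤ 1/2) : s2 p ≤ 3*(1-p) := by
  have : s2 p ≤ Real.sqrt ((3*(1-p))^2) := Real.sqrt_le_sqrt (by nlinarith)
  rwa [Real.sqrt_sq (by linarith)] at this

lemma LfUf {p : ℝ} (h : p ∈ Set.Ioo aa (1/2)) : Lf p ≤ Uf p := by
  obtain ⟨h1, h2⟩ := h
  have hs2 := s2_le h2.le
  have hs1 := s1_nonneg p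
  rw [Lf, Uf]
  apply max_le <;> apply le_min <;> [linarith; linarith; linarith; linarith]

lemma s1_le {p : ℝ} (h : p ≤ 1/4) (h0 : 0 ≤ p) : s1 p ≤ 1/4 := by
  have : s1 p ≤ Real.sqrt ((1/4)^2) := Real.sqrt_le_sqrt (by nlinarith)
  rwa [Real.sqrt_sq (by norm_num)] at this

lemma K1 {p : ℝ} (ha : aa ≤ p) (hb : p ≤ 1/4) : 2 * s1 p + s2 p ≤ 3*(1-p) := by
  have h0 : (0:ℝ) ≤ p := le_trans aa_pos.le ha
  have hs1 : s1 p ^ 2 = 9*p^2+2*p-1 := s1_sq (s1_arg_nonneg ha)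
  have hs1n := s1_nonneg p
  have hstep : (1-p) * s1 p ≤ 3*p^2 := by
    have h1 : ((1-p) * s1 p)^2 ≤ (3*p^2)^2 := by
      rw [mul_pow, hs1]
      nlinarith [mul_nonneg (mul_nonneg (show (0:ℝ) ≤ 1-4*p by linarith) (show (0:ℝ) ≤ 1-2*p by linarith)) (show (0:ℝ) ≤ 1+2*p by linarith)]
    have h2 : 0 ≤ (1-p) * s1 p := mul_nonneg (by linarith) hs1n
    nlinarith [h1, h2]
  have h3 : 0 ≤ 3*(1-p) - 2*s1 p := by
    have := s1_le hb h0
    linarith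
  have h2 : s2 p ≤ Real.sqrt ((3*(1-p)-2*s1 p)^2) := by
    apply Real.sqrt_le_sqrt
    nlinarith [hstep, hs1]
  rw [Real.sqrt_sq h3] at h2
  linarith

lemma K2 {p : ℝ} (ha : 1/4 ≤ p) (hb : p ≤ 1/2) : 3*(1-p) ≤ 2 * s1 p + s2 p := by
  have hs1 : s1 p ^ 2 = 9*p^2+2*p-1 := s1_sq (by nlinarith)
  have hs1n := s1_nonneg p
  have hs2n := s2_nonneg p
  have hs2 := s2_sq p
  have hz : 3*(1-2*p-p^2) ≤ (1-p) * s2 p := by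
    rcases le_or_gt (3*(1-2*p-p^2)) 0 with h | h
    · exact le_trans h (mul_nonneg (by linarith) hs2n)
    · have h1 : (3*(1-2*p-p^2))^2 ≤ ((1-p) * s2 p)^2 := by
        rw [show ((1-p) * s2 p)^2 = (1-p)^2 * (s2 p)^2 from mul_pow _ _ _, hs2]
        nlinarith [mul_nonneg (mul_nonneg (show (0:ℝ) ≤ 4*p-1 by linarith) (show (0:ℝ) ≤ 1-2*p by linarith)) (show (0:ℝ) ≤ 1+2*p by linarith)]
      nlinarith [h1, mul_nonneg (show (0:ℝ) ≤ 1-p by linarith) hs2n]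
  rcases le_or_gt (3*(1-p) - s2 p) 0 with h | h
  · linarith
  · have h1 : (3*(1-p) - s2 p)^2 ≤ (2 * s1 p)^2 := by
      rw [mul_pow, hs1]
      nlinarith [hz, hs2]
    nlinarith [h1, h]

lemma s1_cont : Continuous s1 := by
  unfold s1; fun_prop
lemma s2_cont : Continuous s2 := by
  unfold s2; fun_prop
lemma Lf_cont : Continuous Lf := by
  unfold Lf
  unfold s1 s2
  fun_prop
lemma Uf_cont : Continuous Uf := by
  unfold Uf s1 s2
  fun_prop

lemma vol_TT : volume TT = ENNReal.ofReal (∫ p in Set.Ioo aa (1/2), (Uf - Lf) p) := by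
  rw [TT_eq, Measure.volume_eq_prod]
  exact volume_regionBetween_eq_integral
    (Lf_cont.integrableOn_Icc.mono_set Set.Ioo_subset_Icc_self)
    (Uf_cont.integrableOn_Icc.mono_set Set.Ioo_subset_Icc_self)
    measurableSet_Ioo (fun x hx => LfUf hx)

noncomputable def G1 (p : ℝ) : ℝ := (3*p+1/3) * s1 p / 6 - 5/27 * Real.log ((3*p+1/3) + s1 p)

lemma G1_deriv {x : ℝ} (hx : 0 < 9*x^2+2*x-1) (hx0 : 0 < x) :
    HasDerivAt G1 (s1 x) x := by
  have hs0 : 0 < s1 x := Real.sqrt_pos.2 hx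
  have hu : s1 x ^ 2 = 9*x^2+2*x-1 := Real.sq_sqrt hx.le
  have hpoly : HasDerivAt (fun p : ℝ => 9*p^2+2*p-1) (18*x+2) x := by
    have := (((hasDerivAt_pow 2 x).const_mul (9:ℝ)).add ((hasDerivAt_id x).const_mul (2:ℝ))).sub_const (1:ℝ)
    refine this.congr_deriv ?_
    norm_num; ring
  have hsq : HasDerivAt s1 ((18*x+2) / (2 * s1 x)) x := by
    have := hpoly.sqrt (ne_of_gt hx)
    exact this
  have hlin : HasDerivAt (fun p : ℝ => 3*p+1/3) 3 x := by
    have := ((hasDerivAt_id x).const_mul (3:ℝ)).add_const (1/3:ℝ)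
    refine this.congr_deriv ?_
    norm_num
  have harg : 0 < (3*x+1/3) + s1 x := by positivity
  have hprod : HasDerivAt (fun p => (3*p+1/3) * s1 p)
      (3 * s1 x + (3*x+1/3) * ((18*x+2) / (2 * s1 x))) x := hlin.mul hsq
  have hlog : HasDerivAt (fun p => Real.log ((3*p+1/3) + s1 p))
      ((3 + (18*x+2) / (2 * s1 x)) / ((3*x+1/3) + s1 x)) x :=
    (hlin.add hsq).log (ne_of_gt harg)
  have := (hprod.div_const 6).sub (hlog.const_mul (5/27 : ℝ))
  refine this.congr_deriv ?_
  have h1 : s1 x ≠ 0 := ne_of_gt hs0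
  have h2 : (3*x+1/3) + s1 x ≠ 0 := ne_of_gt harg
  field_simp
  linear_combination (-1458 * s1 x - 486 - 4374*x) * hu

noncomputable def HH (p : ℝ) : ℝ := (3*p)/2 - (3*p^2)/4 -
  ((3*p-5/3) * s2 p / 12 + 5/27 * Real.log ((3*p-5/3) + s2 p))

lemma s2_arg_pos (x : ℝ) : 0 < 9*x^2-10*x+5 := by nlinarith [sq_nonneg (3*x-5/3)]

lemma HH_deriv (x : ℝ) : HasDerivAt HH ((3*(1-x) - s2 x)/2) x := by
  have hx := s2_arg_pos x
  have hs0 : 0 < s2 x := Real.sqrt_pos.2 hx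
  have hu : s2 x ^ 2 = 9*x^2-10*x+5 := Real.sq_sqrt hx.le
  have hpoly : HasDerivAt (fun p : ℝ => 9*p^2-10*p+5) (18*x-10) x := by
    have := (((hasDerivAt_pow 2 x).const_mul (9:ℝ)).sub ((hasDerivAt_id x).const_mul (10:ℝ))).add_const (5:ℝ)
    refine this.congr_deriv ?_
    norm_num; ring
  have hsq : HasDerivAt s2 ((18*x-10) / (2 * s2 x)) x := hpoly.sqrt (ne_of_gt hx)
  have hlin : HasDerivAt (fun p : ℝ => 3*p-5/3) 3 x := by
    have := ((hasDerivAt_id x).const_mul (3:ℝ)).sub_const (5/3:ℝ)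
    refine this.congr_deriv ?_
    norm_num
  have harg : 0 < (3*x-5/3) + s2 x := by
    have h1 : |3*x-5/3| < s2 x := by
      rw [show |3*x-5/3| = Real.sqrt ((3*x-5/3)^2) from (Real.sqrt_sq_eq_abs _).symm]
      exact Real.sqrt_lt_sqrt (sq_nonneg _) (by nlinarith)
    cases abs_lt.1 h1; linarith
  have hprod : HasDerivAt (fun p => (3*p-5/3) * s2 p)
      (3 * s2 x + (3*x-5/3) * ((18*x-10) / (2 * s2 x))) x := hlin.mul hsq
  have hlog : HasDerivAt (fun p => Real.log ((3*p-5/3) + s2 p))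
      ((3 + (18*x-10) / (2 * s2 x)) / ((3*x-5/3) + s2 x)) x :=
    (hlin.add hsq).log (ne_of_gt harg)
  have hq1 : HasDerivAt (fun p : ℝ => (3*p)/2 - (3*p^2)/4) (3/2 - 3*x/2) x := by
    have := (((hasDerivAt_id x).const_mul (3:ℝ)).div_const 2).sub
      (((hasDerivAt_pow 2 x).const_mul (3:ℝ)).div_const 4)
    refine this.congr_deriv ?_
    norm_num; ring
  have h1 : s2 x ≠ 0 := ne_of_gt hs0
  have h2 : (3*x-5/3) + s2 x ≠ 0 := ne_of_gt harg
  have := hq1.sub ((hprod.div_const 12).add (hlog.const_mul (5/27 : ℝ)))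
  have hb : (3 * s2 x + (3*x-5/3) * ((18*x-10) / (2 * s2 x))) / 12
      + 5/27 * ((3 + (18*x-10) / (2 * s2 x)) / ((3*x-5/3) + s2 x)) = s2 x / 2 := by
    have e1 : (3 * s2 x + (3*x-5/3) * ((18*x-10)/(2*s2 x))) / 12
        = (s2 x^2 + (3*x-5/3)^2) / (4 * s2 x) := by
      field_simp
      ring
    have e2 : (3 + (18*x-10) / (2*s2 x)) = 3 * ((3*x-5/3) + s2 x) / s2 x := by
      field_simp
      ring
    have e3 : 3 * ((3*x-5/3)+s2 x) / s2 x / ((3*x-5/3)+s2 x) = 3 / s2 x := by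
      rw [div_div, mul_comm (s2 x), ← div_div, mul_div_assoc, div_self h2, mul_one]
    rw [e1, e2, e3]
    field_simp
    linear_combination (-486) * hu
  rw [hb] at this
  refine this.congr_deriv ?_
  ring

lemma G1_contOn : ContinuousOn G1 (Set.Icc aa (1/4)) := by
  apply ContinuousOn.sub
  · exact (((continuous_const.mul continuous_id).add continuous_const).mul s1_cont).continuousOn.div_const 6
  · apply ContinuousOn.mul continuousOn_const
    apply ContinuousOn.log
    · exact (((continuous_const.mul continuous_id).add continuous_const).add s1_cont).continuousOn
    · intro x hx
      have h1 : 0 < 3*x+1/3 := by nlinarith [aa_pos, hx.1]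
      have := s1_nonneg x
      intro hc
      nlinarith

lemma eval_s1_aa : s1 aa = 0 := by
  rw [s1, show 9*aa^2+2*aa-1 = 0 from aa_root, Real.sqrt_zero]

lemma eval_s1_quarter : s1 (1/4) = 1/4 := by
  rw [s1, show 9*(1/4:ℝ)^2+2*(1/4)-1 = (1/4)^2 by norm_num, Real.sqrt_sq (by norm_num)]

lemma eval_s2_quarter : s2 (1/4) = 7/4 := by
  rw [s2, show 9*(1/4:ℝ)^2-10*(1/4)+5 = (7/4)^2 by norm_num, Real.sqrt_sq (by norm_num)]

lemma eval_s2_half : s2 (1/2) = 3/2 := by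
  rw [s2, show 9*(1/2:ℝ)^2-10*(1/2)+5 = (3/2)^2 by norm_num, Real.sqrt_sq (by norm_num)]

lemma intOne : ∫ p in aa..(1/4), s1 p = G1 (1/4) - G1 aa := by
  apply intervalIntegral.integral_eq_sub_of_hasDeriv_right_of_le aa_lt.le G1_contOn
  · intro x hx
    have h1 : 0 < 9*x^2+2*x-1 := by
      nlinarith [aa_root, aa_pos, mul_pos (sub_pos.2 hx.1)
        (show (0:ℝ) < 9*(x+aa)+2 by nlinarith [aa_pos, hx.1, aa_pos.trans hx.1])]
    exact (G1_deriv h1 (aa_pos.trans hx.1)).hasDerivWithinAt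
  · exact s1_cont.intervalIntegrable _ _

lemma intTwo : ∫ p in (1/4:ℝ)..(1/2), (3*(1-p) - s2 p)/2 = HH (1/2) - HH (1/4) := by
  apply intervalIntegral.integral_eq_sub_of_hasDerivAt (fun x _ => HH_deriv x)
  exact (((continuous_const.mul (continuous_const.sub continuous_id)).sub s2_cont).div_const 2).intervalIntegrable _ _

lemma UfLf_left {p : ℝ} (h : p ∈ Set.Icc aa (1/4)) : (Uf - Lf) p = s1 p := by
  have hK := K1 h.1 h.2
  have h1 := s1_nonneg p
  have h2 := s2_nonneg p
  simp only [Pi.sub_apply]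
  rw [Uf, Lf, min_eq_left (by linarith), max_eq_left (by linarith)]
  ring

lemma UfLf_right {p : ℝ} (h : p ∈ Set.Icc (1/4:ℝ) (1/2)) : (Uf - Lf) p = (3*(1-p) - s2 p)/2 := by
  have hK := K2 h.1 h.2
  have h1 := s1_nonneg p
  have h2 := s2_nonneg p
  simp only [Pi.sub_apply]
  rw [Uf, Lf, min_eq_right (by linarith), max_eq_right (by linarith)]
  ring

lemma integral_total : ∫ p in Set.Ioo aa (1/2), (Uf - Lf) p
    = (G1 (1/4) - G1 aa) + (HH (1/2) - HH (1/4)) := by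
  have hint : ∀ a b : ℝ, IntervalIntegrable (Uf - Lf) volume a b :=
    fun a b => (Uf_cont.sub Lf_cont).intervalIntegrable a b
  have c1 : ∫ p in aa..(1/4:ℝ), (Uf - Lf) p = ∫ p in aa..(1/4:ℝ), s1 p :=
    intervalIntegral.integral_congr (by
      rw [Set.uIcc_of_le aa_lt.le]
      exact fun p hp => UfLf_left hp)
  have c2 : ∫ p in (1/4:ℝ)..(1/2), (Uf - Lf) p
      = ∫ p in (1/4:ℝ)..(1/2), (3*(1-p) - s2 p)/2 :=
    intervalIntegral.integral_congr (by
      rw [Set.uIcc_of_le (by norm_num : (1/4:ℝ) ≤ 1/2)]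
      exact fun p hp => UfLf_right hp)
  rw [← MeasureTheory.integral_Ioc_eq_integral_Ioo,
    ← intervalIntegral.integral_of_le (by linarith [aa_lt] : aa ≤ 1/2),
    ← intervalIntegral.integral_add_adjacent_intervals (hint aa (1/4)) (hint (1/4) (1/2)),
    c1, c2, intOne, intTwo]

lemma log_id : 2*Real.log (4/3) - Real.log (Real.sqrt 10 / 3) - Real.log (5/6)
    = 3/2 * Real.log (8/5) := by
  have l4 : Real.log 4 = 2 * Real.log 2 := by
    rw [show (4:ℝ) = 2^2 by norm_num, Real.log_pow]; push_cast; ring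
  have l8 : Real.log 8 = 3 * Real.log 2 := by
    rw [show (8:ℝ) = 2^3 by norm_num, Real.log_pow]; push_cast; ring
  have l6 : Real.log 6 = Real.log 2 + Real.log 3 := by
    rw [show (6:ℝ) = 2*3 by norm_num, Real.log_mul (by norm_num) (by norm_num)]
  have l10 : Real.log 10 = Real.log 2 + Real.log 5 := by
    rw [show (10:ℝ) = 2*5 by norm_num, Real.log_mul (by norm_num) (by norm_num)]
  have lsq : Real.log (Real.sqrt 10) = Real.log 10 / 2 := Real.log_sqrt (by norm_num)
  have l43 : Real.log (4/3) = Real.log 4 - Real.log 3 := Real.log_div (by norm_num) (by norm_num)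
  have l56 : Real.log (5/6) = Real.log 5 - Real.log 6 := Real.log_div (by norm_num) (by norm_num)
  have l85 : Real.log (8/5) = Real.log 8 - Real.log 5 := Real.log_div (by norm_num) (by norm_num)
  have ls3 : Real.log (Real.sqrt 10/3) = Real.log (Real.sqrt 10) - Real.log 3 :=
    Real.log_div (Real.sqrt_ne_zero'.2 (by norm_num : (0:ℝ) < 10)) (by norm_num)
  rw [l43, l56, l85, ls3, lsq]
  linarith [l4, l8, l6, l10]

lemma eval_total : (G1 (1/4) - G1 aa) + (HH (1/2) - HH (1/4)) = 1/6 - 5/18 * Real.log (8/5) := by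
  have e1 : G1 (1/4) = 13/288 - 5/27 * Real.log (4/3) := by
    rw [G1, eval_s1_quarter, show 3*(1/4:ℝ)+1/3+1/4 = 4/3 by norm_num]
    norm_num
  have e2 : G1 aa = -(5/27) * Real.log (Real.sqrt 10 / 3) := by
    rw [G1, eval_s1_aa, show 3*aa+1/3+0 = Real.sqrt 10 / 3 by rw [aa]; ring]
    ring
  have e3 : HH (1/2) = 7/12 - 5/27 * Real.log (4/3) := by
    rw [HH, eval_s2_half, show 3*(1/2:ℝ)-5/3+3/2 = 4/3 by norm_num]
    ring
  have e4 : HH (1/4) = 133/288 - 5/27 * Real.log (5/6) := by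
    rw [HH, eval_s2_quarter, show 3*(1/4:ℝ)-5/3+7/4 = 5/6 by norm_num]
    ring
  rw [e1, e2, e3, e4]
  linarith [log_id]

end BrokenStickAux

theorem broken_stick_acute_medians_prob :
    volume {p : ℝ × ℝ | p.1 ∈ Set.Icc (0:ℝ) 1 ∧ p.2 ∈ Set.Icc (0:ℝ) 1 ∧
      min p.1 p.2 ^ 2 + |p.1 - p.2| ^ 2 + (1 - max p.1 p.2) ^ 2 <
        6 * min (min p.1 p.2 ^ 2) (min (|p.1 - p.2| ^ 2) ((1 - max p.1 p.2) ^ 2))} =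
    ENNReal.ofReal (1 / 3 - 5 / 9 * Real.log (8 / 5)) := by
  show volume SS = _
  rw [vol_SS, vol_TT, integral_total, eval_total,
    show (2:ENNReal) = ENNReal.ofReal 2 by norm_num,
    ← ENNReal.ofReal_mul (by norm_num)]
  congr 1
  ring
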